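/- Let D be a quasi-transitive digraph (i.e., 2-quasi-transitive) with a unique initial strong component C. If C has at least four vertices, then D has at least four 3-kings. If C has exactly three vertices, then every vertex of C is a 2-king of D. If C has one or two vertices, then every vertex of C is a 1-king of D. -/

import Mathlib

variable {V : Type*}

/-- A directed path of length `n` from `u` to `v` in the digraph with arc relation `A`:
a sequence of `n + 1` pairwise distinct vertices, consecutive ones joined by arcs. -/
def HasPathN (A : V → V → Prop) (u v : V) (n : ℕ) : Prop :=
  ∃ f : Fin (n + 1) → V, Function.Injective f ∧ f 0 = u ∧ f (Fin.last n) = v ∧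
    ∀ i : Fin n, A (f i.castSucc) (f i.succ)

/-- The distance from `u` to `v`: the length of a shortest directed path from `u` to `v`,
`⊤` if there is no such path. -/
noncomputable def ddist (A : V → V → Prop) (u v : V) : ℕ∞ :=
  sInf {n : ℕ∞ | ∃ m : ℕ, n = (m : ℕ∞) ∧ HasPathN A u v m}

/-- `D` is `k`-quasi-transitive if for every directed path `(v_0, …, v_k)` of length `k`,
either `(v_0, v_k)` or `(v_k, v_0)` is an arc. -/
def KQuasiTrans (A : V → V → Prop) (k : ℕ) : Prop :=
  ∀ u v : V, HasPathN A u v k → A u v ∨ A v u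

/-- A vertex `v` is an `r`-king if every vertex is within distance `r` from `v`. -/
def IsRKing (A : V → V → Prop) (r : ℕ) (v : V) : Prop :=
  ∀ u : V, ddist A v u ≤ (r : ℕ∞)

/-- `u` reaches `v` by a directed path. -/
def Reaches (A : V → V → Prop) (u v : V) : Prop :=
  ∃ n : ℕ, HasPathN A u v n

/-- A strong component: the set of all vertices mutually reachable with some vertex. -/
def IsStrongComponent (A : V → V → Prop) (S : Set V) : Prop :=
  ∃ v : V, S = {u | Reaches A u v ∧ Reaches A v u}

/-- An initial strong component: a strong component receiving no arcs from outside. -/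
def IsInitialStrongComponent (A : V → V → Prop) (S : Set V) : Prop :=
  IsStrongComponent A S ∧ ∀ u v : V, u ∉ S → v ∈ S → ¬ A u v

/-- The out-degree of `v` in `D`. -/
noncomputable def outDeg (A : V → V → Prop) (v : V) : ℕ :=
  {u : V | A v u}.ncard

/-- The out-degree of `v` in the subdigraph of `D` induced by `C`. -/
noncomputable def outDegIn (A : V → V → Prop) (C : Set V) (v : V) : ℕ :=
  {u ∈ C | A v u}.ncard

/-- The maximum out-degree of the subdigraph induced by `C`. -/
noncomputable def maxOutDegIn (A : V → V → Prop) (C : Set V) : ℕ :=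
  sSup (outDegIn A C '' C)

namespace QTP

inductive Walk (A : V → V → Prop) : V → V → ℕ → Prop
  | nil (v : V) : Walk A v v 0
  | cons {u w v : V} {n : ℕ} (h : A u w) (hw : Walk A w v n) : Walk A u v (n + 1)

variable {A : V → V → Prop}

lemma Walk.trans {u v w : V} {m n : ℕ} (h1 : Walk A u v m) (h2 : Walk A v w n) :
    Walk A u w (m + n) := by
  induction h1 with
  | nil v => simpa using h2
  | cons h _ ih => rw [Nat.add_right_comm]; exact .cons h (ih h2)

lemma Walk.single {u v : V} (h : A u v) : Walk A u v 1 := .cons h (.nil v)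

lemma Walk.append_arc {u v w : V} {n : ℕ} (h1 : Walk A u v n) (h2 : A v w) :
    Walk A u w (n + 1) := h1.trans (Walk.single h2)

/-- last arc decomposition -/
lemma Walk.last_arc {u v : V} {n : ℕ} (h : Walk A u v n) :
    u = v ∨ ∃ x, A x v := by
  induction h with
  | nil v => exact Or.inl rfl
  | cons h _ ih =>
    rcases ih with rfl | ⟨x, hx⟩
    · exact Or.inr ⟨_, h⟩
    · exact Or.inr ⟨x, hx⟩

/-- first entry into a set -/
lemma Walk.first_entry {K : Set V} {u v : V} {n : ℕ} (h : Walk A u v n)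
    (hu : u ∉ K) (hv : v ∈ K) : ∃ x y, x ∉ K ∧ y ∈ K ∧ A x y := by
  induction h with
  | nil v => exact absurd hv hu
  | @cons u w v n h hw ih =>
    by_cases hmem : w ∈ K
    · exact ⟨u, w, hu, hmem, h⟩
    · exact ih hmem hv

lemma hasPathN_to_walk {u v : V} {n : ℕ} (h : HasPathN A u v n) : Walk A u v n := by
  induction n generalizing u with
  | zero =>
    obtain ⟨f, -, h0, hl, -⟩ := h
    have : u = v := by rw [← h0, ← hl]; rfl
    exact this ▸ .nil u
  | succ n ih =>
    obtain ⟨f, hinj, h0, hl, harc⟩ := h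
    have h01 : A u (f 1) := by
      have := harc 0
      simp only [Fin.castSucc_zero, Fin.succ_zero_eq_one, h0] at this; exact this
    refine .cons h01 (ih ⟨f ∘ Fin.succ, hinj.comp (Fin.succ_injective _), rfl, ?_, ?_⟩)
    · simp only [Function.comp_apply, Fin.succ_last, hl]
    · intro i
      have := harc i.succ
      simp only [Function.comp_apply, Fin.succ_castSucc]; exact this

lemma walk_to_list {u v : V} {n : ℕ} (h : Walk A u v n) :
    ∃ l : List V, l.Chain' A ∧ l.head? = some u ∧ l.getLast? = some v ∧
      l.length = n + 1 := by
  induction h with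
  | nil v => exact ⟨[v], by simp [List.Chain'], rfl, rfl, rfl⟩
  | @cons u w v n h hw ih =>
    obtain ⟨l, hc, hh, hl, hlen⟩ := ih
    obtain ⟨a, l', rfl⟩ : ∃ a l', l = a :: l' := by
      cases l with
      | nil => simp at hh
      | cons a l' => exact ⟨a, l', rfl⟩
    have ha : a = w := by simpa using hh
    subst ha
    exact ⟨u :: a :: l', by exact List.isChain_cons_cons.mpr ⟨h, hc⟩, rfl, by simpa using hl,
      by simp [hlen]⟩
  
lemma getLast?_cons_ne {x : V} {xs : List V} (h : xs ≠ []) :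
    (x :: xs).getLast? = xs.getLast? := by
  cases xs with
  | nil => exact absurd rfl h
  | cons b bs => simp [List.getLast?_cons_cons]

lemma dedup_chain' : ∀ l : List V, l.Chain' A → l ≠ [] →
    ∃ p : List V, p.Chain' A ∧ p.Nodup ∧ p.head? = l.head? ∧ p.getLast? = l.getLast? ∧
      p.length ≤ l.length := by
  intro l
  induction l with
  | nil => intro _ h; exact absurd rfl h
  | cons x xs ih =>
    intro hc _
    by_cases hxs : xs = []
    · subst hxs; exact ⟨[x], by simp [List.Chain'], by simp, rfl, rfl, le_refl _⟩
    obtain ⟨p, hpc, hpn, hph, hpl, hplen⟩ := ih hc.tail hxs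
    have hpne : p ≠ [] := by
      intro h; rw [h] at hph
      exact hxs (List.head?_eq_none_iff.mp hph.symm)
    by_cases hmem : x ∈ p
    · obtain ⟨s, t, rfl⟩ := List.append_of_mem hmem
      refine ⟨x :: t, (List.isChain_split.mp hpc).2,
        (List.Nodup.sublist (List.sublist_append_right s (x :: t)) hpn), rfl, ?_, ?_⟩
      · rw [getLast?_cons_ne hxs, ← hpl]
        exact Eq.symm (List.getLast?_append_of_ne_nil (l₁ := s) (by simp))
      · have := @List.length_append _ s (x :: t)
        simp only [List.length_cons] at *
        omega
    · refine ⟨x :: p, ?_, by simp [hpn, hmem], rfl, ?_, by simp; omega⟩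
      · refine List.isChain_cons.mpr ⟨?_, hpc⟩
        intro y hy
        have : xs.head? = some y := by rw [← hph, hy]
        exact (List.isChain_cons.mp hc).1 y this
      · rw [getLast?_cons_ne hxs, ← hpl, getLast?_cons_ne hpne]

lemma list_to_path {u v : V} {p : List V} (hc : p.Chain' A) (hn : p.Nodup)
    (hh : p.head? = some u) (hl : p.getLast? = some v) :
    HasPathN A u v (p.length - 1) := by
  have hpne : p ≠ [] := by intro h; rw [h] at hh; simp at hh
  have hlen : 0 < p.length := List.length_pos_iff.mpr hpne
  have hcast : p.length - 1 + 1 = p.length := by omega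
  refine ⟨fun i => p.get (Fin.cast hcast i), ?_, ?_, ?_, ?_⟩
  · exact (List.nodup_iff_injective_get.mp hn).comp (Fin.cast_injective _)
  · have : p.get ⟨0, hlen⟩ = u := by
      cases p with
      | nil => simp at hh
      | cons a l => simpa using (by simpa using hh.symm : u = a).symm
    simpa using this
  · have : p.getLast hpne = v := by
      rw [List.getLast?_eq_getLast hpne] at hl; simpa using hl
    rw [← this, List.getLast_eq_getElem]
    simp [Fin.cast, Fin.last]
  · intro i
    have h2 := List.isChain_iff_getElem.mp hc i (by have := i.is_lt; omega)
    convert h2 using 2 <;> rfl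


lemma walk_to_path {u v : V} {n : ℕ} (h : Walk A u v n) :
    ∃ m ≤ n, HasPathN A u v m := by
  obtain ⟨l, hc, hh, hl, hlen⟩ := walk_to_list h
  have hlne : l ≠ [] := by intro h'; rw [h'] at hh; simp at hh
  obtain ⟨p, hpc, hpn, hph, hpl, hplen⟩ := dedup_chain' l hc hlne
  refine ⟨p.length - 1, by omega, list_to_path hpc hpn (hph.trans hh) (hpl.trans hl)⟩

lemma ddist_le_iff_path {u v : V} {n : ℕ} :
    ddist A u v ≤ (n : ℕ∞) ↔ ∃ m ≤ n, HasPathN A u v m := by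
  constructor
  · intro h
    by_contra hcon
    push_neg at hcon
    have : ((n : ℕ∞) + 1) ≤ ddist A u v := by
      apply le_sInf
      rintro b ⟨m, rfl, hm⟩
      have : n < m := by
        by_contra hnm; push_neg at hnm; exact hcon m hnm hm
      have : (n + 1 : ℕ) ≤ m := this
      calc ((n : ℕ∞) + 1) = ((n+1 : ℕ) : ℕ∞) := by push_cast; ring
      _ ≤ (m : ℕ∞) := by exact_mod_cast this
    have h2 : ((n : ℕ∞) + 1) ≤ (n : ℕ∞) := this.trans h
    have h3 : (n : ℕ∞) < (n : ℕ∞) + 1 := by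
      exact (ENat.lt_add_one_iff (ENat.coe_ne_top n)).mpr (le_refl _)
    exact absurd (h3.trans_le h2) (lt_irrefl _)
  · rintro ⟨m, hm, hp⟩
    calc ddist A u v ≤ (m : ℕ∞) := sInf_le ⟨m, rfl, hp⟩
    _ ≤ (n : ℕ∞) := by exact_mod_cast hm

lemma ddist_le_iff_walk {u v : V} {n : ℕ} :
    ddist A u v ≤ (n : ℕ∞) ↔ ∃ m ≤ n, Walk A u v m := by
  rw [ddist_le_iff_path]
  constructor
  · rintro ⟨m, hm, hp⟩; exact ⟨m, hm, hasPathN_to_walk hp⟩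
  · rintro ⟨m, hm, hw⟩
    obtain ⟨m', hm', hp⟩ := walk_to_path hw
    exact ⟨m', hm'.trans hm, hp⟩

lemma ddist_le_of_walk {u v : V} {n : ℕ} (h : Walk A u v n) :
    ddist A u v ≤ (n : ℕ∞) := ddist_le_iff_walk.mpr ⟨n, le_refl _, h⟩

lemma reaches_iff_walk {u v : V} : Reaches A u v ↔ ∃ n, Walk A u v n := by
  constructor
  · rintro ⟨n, hp⟩; exact ⟨n, hasPathN_to_walk hp⟩
  · rintro ⟨n, hw⟩
    obtain ⟨m, -, hp⟩ := walk_to_path hw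
    exact ⟨m, hp⟩

lemma reaches_trans {u v w : V} (h1 : Reaches A u v) (h2 : Reaches A v w) :
    Reaches A u w := by
  rw [reaches_iff_walk] at *
  obtain ⟨m, h1⟩ := h1; obtain ⟨n, h2⟩ := h2
  exact ⟨m + n, h1.trans h2⟩

lemma reaches_refl (u : V) : Reaches A u u := reaches_iff_walk.mpr ⟨0, .nil u⟩

lemma qt3 (hqt : KQuasiTrans A 2) {a b c : V} (hab : A a b) (hbc : A b c)
    (h1 : a ≠ b) (h2 : b ≠ c) (h3 : a ≠ c) : A a c ∨ A c a := by
  apply hqt a c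
  refine ⟨![a, b, c], ?_, rfl, rfl, ?_⟩
  · intro i j hij
    fin_cases i <;> fin_cases j <;> simp_all <;>
      first
        | rfl
        | (exact absurd hij h1) | (exact absurd hij h2) | (exact absurd hij h3)
        | (exact absurd hij.symm h1) | (exact absurd hij.symm h2) | (exact absurd hij.symm h3)
  · intro i
    fin_cases i
    · exact hab
    · exact hbc

/-- a minimal path realizing the distance, as an ℕ-indexed function -/
lemma exists_min_path (h : Reaches A u v) :
    ∃ (k : ℕ) (w : ℕ → V), w 0 = u ∧ w k = v ∧
      (∀ i, i < k → A (w i) (w (i + 1))) ∧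
      (∀ i j, i ≤ k → j ≤ k → w i = w j → i = j) ∧
      ddist A u v = (k : ℕ∞) := by
  classical
  have hex : ∃ n, HasPathN A u v n := h
  set k := Nat.find hex with hk
  obtain ⟨f, hinj, h0, hl, harc⟩ := Nat.find_spec hex
  refine ⟨k, fun i => if hi : i ≤ k then f ⟨i, by omega⟩ else v, ?_, ?_, ?_, ?_, ?_⟩
  · simpa using h0
  · simp only [dif_pos (le_refl k)]
    exact hl
  · intro i hik
    simp only [dif_pos (le_of_lt hik)]
    rw [dif_pos (show i + 1 ≤ k from hik)]
    exact harc ⟨i, hik⟩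
  · intro i j hik hjk hw
    simp only [dif_pos hik, dif_pos hjk] at hw
    have := hinj hw
    simpa using congrArg Fin.val this
  · refine le_antisymm ?_ ?_
    · exact sInf_le ⟨k, rfl, Nat.find_spec hex⟩
    · apply le_sInf
      rintro b ⟨m, rfl, hm⟩
      exact_mod_cast Nat.find_le hm

/-- walks along segments of a path function -/
lemma walk_segment {w : ℕ → V} {k : ℕ} (harc : ∀ i, i < k → A (w i) (w (i + 1))) :
    ∀ i j, i ≤ j → j ≤ k → Walk A (w i) (w j) (j - i) := by
  intro i j hij hjk
  induction j, hij using Nat.le_induction with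
  | base => simpa using Walk.nil (w i)
  | succ j hij ih =>
    have hw : Walk A (w i) (w j) (j - i) := ih (by omega)
    have : j + 1 - i = (j - i) + 1 := by omega
    rw [this]
    exact hw.append_arc (harc j (by omega))

section BP

variable (hqt : KQuasiTrans A 2) {w : ℕ → V} {k : ℕ}
  (harc : ∀ i, i < k → A (w i) (w (i + 1)))
  (hinj : ∀ i j, i ≤ k → j ≤ k → w i = w j → i = j)
  (hshort : ∀ m, Walk A (w 0) (w k) m → k ≤ m)

include harc hshort in
lemma no_shortcut : ∀ i j, i < j → j ≤ k → i + 1 + (k - j) < k → ¬ A (w i) (w j) := by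
  intro i j hij hjk hlen hA
  have w1 : Walk A (w 0) (w i) (i - 0) := walk_segment harc 0 i (by omega) (by omega)
  have w2 : Walk A (w 0) (w j) (i - 0 + 1) := w1.append_arc hA
  have w3 : Walk A (w 0) (w k) (i - 0 + 1 + (k - j)) := w2.trans (walk_segment harc j k hjk (le_refl _))
  have := hshort _ w3
  omega

include hqt harc hinj hshort in
lemma backarc : ∀ i, i + 2 ≤ k → A (w (i + 2)) (w i) := by
  intro i hik
  have h1 : A (w i) (w (i+1)) := harc i (by omega)
  have h2 : A (w (i+1)) (w (i+2)) := harc (i+1) (by omega)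
  have hne : ∀ a b, a ≤ k → b ≤ k → a ≠ b → w a ≠ w b := by
    intro a b ha hb hab h; exact hab (hinj a b ha hb h)
  rcases qt3 hqt h1 h2 (hne _ _ (by omega) (by omega) (by omega))
      (hne _ _ (by omega) (by omega) (by omega)) (hne _ _ (by omega) (by omega) (by omega)) with h | h
  · exact absurd h (no_shortcut harc hshort i (i+2) (by omega) (by omega) (by omega))
  · exact h

include hqt harc hinj hshort in
lemma bp_main (hk4 : 4 ≤ k) : A (w k) (w 0) := by
  have hne : ∀ a b, a ≤ k → b ≤ k → a ≠ b → w a ≠ w b := by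
    intro a b ha hb hab h; exact hab (hinj a b ha hb h)
  have key : ∀ j, 2 ≤ j → j ≤ k → A (w k) (w (k - j)) := by
    intro j
    induction j using Nat.strong_induction_on with
    | _ j ih =>
      intro hj2 hjk
      have hbase : A (w k) (w (k - 2)) := by
        have := backarc hqt harc hinj hshort (k - 2) (by omega)
        have e : k - 2 + 2 = k := by omega
        rwa [e] at this
      rcases Nat.lt_or_ge j 3 with hj | hj3
      · have : j = 2 := by omega
        subst this; exact hbase
      rcases Nat.lt_or_ge j 4 with hj' | hj4
      · -- j = 3 : first derive A (w k) (w (k-4)), then A (w k) (w (k-3))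
        have hj3' : j = 3 := by omega
        subst hj3'
        have hk4' : A (w k) (w (k - 4)) := by
          have hb : A (w (k - 2)) (w (k - 4)) := by
            have := backarc hqt harc hinj hshort (k - 4) (by omega)
            have e : k - 4 + 2 = k - 2 := by omega
            rwa [e] at this
          rcases qt3 hqt hbase hb (hne _ _ (le_refl _) (by omega) (by omega))
              (hne _ _ (by omega) (by omega) (by omega)) (hne _ _ (le_refl _) (by omega) (by omega)) with h | h
          · exact h
          · exact absurd h (no_shortcut harc hshort (k-4) k (by omega) (le_refl _) (by omega))
        have harc' : A (w (k - 4)) (w (k - 3)) := by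
          have := harc (k - 4) (by omega)
          have e : k - 4 + 1 = k - 3 := by omega
          rwa [e] at this
        rcases qt3 hqt hk4' harc' (hne _ _ (le_refl _) (by omega) (by omega))
            (hne _ _ (by omega) (by omega) (by omega)) (hne _ _ (le_refl _) (by omega) (by omega)) with h | h
        · exact h
        · exact absurd h (no_shortcut harc hshort (k-3) k (by omega) (le_refl _) (by omega))
      · -- j ≥ 4 : use IH at j - 2
        have hIH : A (w k) (w (k - (j - 2))) := ih (j - 2) (by omega) (by omega) (by omega)
        have hb : A (w (k - (j - 2))) (w (k - j)) := by
          have := backarc hqt harc hinj hshort (k - j) (by omega)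
          have e : k - j + 2 = k - (j - 2) := by omega
          rwa [e] at this
        rcases qt3 hqt hIH hb (hne _ _ (le_refl _) (by omega) (by omega))
            (hne _ _ (by omega) (by omega) (by omega)) (hne _ _ (le_refl _) (by omega) (by omega)) with h | h
        · exact h
        · exact absurd h (no_shortcut harc hshort (k-j) k (by omega) (le_refl _) (by omega))
  have := key k (by omega) (le_refl _)
  simpa using this

end BP

lemma reach_adj (hqt : KQuasiTrans A 2) {x y : V} (h : Reaches A x y) (hne : x ≠ y) :
    A x y ∨ Reaches A y x := by
  obtain ⟨k, w, h0, hk, harc, hinj, hd⟩ := exists_min_path h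
  subst h0; subst hk
  have hshort : ∀ m, Walk A (w 0) (w k) m → k ≤ m := by
    intro m hw
    have := ddist_le_of_walk hw
    rw [hd] at this
    exact_mod_cast this
  match hkk : k, harc, hinj, hshort with
  | 0, harc, hinj, hshort => exact absurd rfl hne
  | 1, harc, hinj, hshort => exact Or.inl (harc 0 (by omega))
  | 2, harc, hinj, hshort =>
    refine Or.inr (reaches_iff_walk.mpr ⟨1, Walk.single ?_⟩)
    have := backarc hqt harc hinj hshort 0 (by omega)
    exact this
  | 3, harc, hinj, hshort =>
    refine Or.inr (reaches_iff_walk.mpr ⟨3, ?_⟩)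
    have b1 : A (w 3) (w 1) := backarc hqt harc hinj hshort 1 (by omega)
    have b0 : A (w 2) (w 0) := backarc hqt harc hinj hshort 0 (by omega)
    exact .cons b1 (.cons (harc 1 (by omega)) (.cons b0 (.nil _)))
  | (m + 4), harc, hinj, hshort =>
    exact Or.inr (reaches_iff_walk.mpr ⟨1, Walk.single
      (bp_main hqt harc hinj hshort (by omega))⟩)

section CStruct

variable [Fintype V] {C : Set V}
  (hC : IsInitialStrongComponent A C)
  (huniq : ∀ S : Set V, IsInitialStrongComponent A S → S = C)

include hC in
lemma strongC {u v : V} (hu : u ∈ C) (hv : v ∈ C) : Reaches A u v := by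
  obtain ⟨v₀, hv₀⟩ := hC.1
  rw [hv₀] at hu hv
  exact reaches_trans hu.1 hv.2

lemma _root_.Set.Finite.exists_maximal_wrt {α β : Type*} [LinearOrder β] (f : α → β)
    (s : Set α) (h : s.Finite) (hs : s.Nonempty) :
    ∃ a ∈ s, ∀ a' ∈ s, f a ≤ f a' → f a = f a' := by
  obtain ⟨a, ha, hmax⟩ := Set.exists_max_image s f h hs
  exact ⟨a, ha, fun a' ha' hle => le_antisymm hle (hmax a' ha')⟩

include hC in
lemma enter_C {x y : V} (hA : A x y) (hy : y ∈ C) : x ∈ C := by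
  by_contra hx
  exact hC.2 x y hx hy hA

include hC huniq in
lemma reach_all {v : V} (hv : v ∈ C) (u : V) : Reaches A v u := by
  classical
  obtain ⟨a, haS, hamax⟩ := Set.Finite.exists_maximal_wrt
    (fun x => {y | Reaches A x y}.ncard) {x | Reaches A x u} (Set.toFinite _)
    ⟨u, reaches_refl u⟩
  have hmax : ∀ x, Reaches A x a → Reaches A a x := by
    intro x hx
    have hsub : {y | Reaches A a y} ⊆ {y | Reaches A x y} := by
      intro y hy; exact reaches_trans hx hy
    have hxS : x ∈ {x | Reaches A x u} := reaches_trans hx haS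
    have hle : {y | Reaches A a y}.ncard ≤ {y | Reaches A x y}.ncard :=
      Set.ncard_le_ncard hsub (Set.toFinite _)
    have heq := hamax x hxS hle
    have hEq : {y | Reaches A a y} = {y | Reaches A x y} :=
      Set.eq_of_subset_of_ncard_le hsub (le_of_eq heq.symm) (Set.toFinite _)
    have hxmem : x ∈ {y | Reaches A x y} := reaches_refl x
    rw [← hEq] at hxmem
    exact hxmem
  have hinit : IsInitialStrongComponent A {z | Reaches A z a ∧ Reaches A a z} := by
    constructor
    · exact ⟨a, rfl⟩
    · intro p q hp hq hA
      have hpa : Reaches A p a := reaches_trans (reaches_iff_walk.mpr ⟨1, Walk.single hA⟩) hq.1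
      exact hp ⟨hpa, hmax p hpa⟩
  have hXC := huniq _ hinit
  have haC : a ∈ C := by
    rw [← hXC]; exact ⟨reaches_refl a, reaches_refl a⟩
  exact reaches_trans (strongC hC hv haC) haS

include hC huniq in
lemma out_dominate (hqt : KQuasiTrans A 2) {v u : V} (hv : v ∈ C) (hu : u ∉ C) : A v u := by
  have hr : Reaches A v u := reach_all hC huniq hv u
  have hne : v ≠ u := by rintro rfl; exact hu hv
  rcases reach_adj hqt hr hne with h | h
  · exact h
  · exfalso
    apply hu
    obtain ⟨v₀, hv₀⟩ := hC.1
    have hvC : v ∈ C := hv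
    rw [hv₀] at hv ⊢
    exact ⟨reaches_trans h hv.1, reaches_trans hv.2 (reach_all hC huniq hvC u)⟩

end CStruct

lemma ddist_self_le (u : V) (n : ℕ) : ddist A u u ≤ (n : ℕ∞) :=
  ddist_le_iff_walk.mpr ⟨0, by omega, .nil u⟩

lemma ddist_le_one {u v : V} (h : A u v) (n : ℕ) (hn : 1 ≤ n) : ddist A u v ≤ (n : ℕ∞) :=
  ddist_le_iff_walk.mpr ⟨1, hn, Walk.single h⟩

lemma ddist_cons {x b u : V} {n : ℕ} (h : A x b) (hd : ddist A b u ≤ (n : ℕ∞)) :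
    ddist A x u ≤ ((n + 1 : ℕ) : ℕ∞) := by
  obtain ⟨m, hm, hw⟩ := ddist_le_iff_walk.mp hd
  exact ddist_le_iff_walk.mpr ⟨m + 1, by omega, .cons h hw⟩

section CStruct2

variable [Fintype V] {C : Set V}
  (hloop : ∀ v : V, ¬ A v v)
  (hqt : KQuasiTrans A 2)
  (hC : IsInitialStrongComponent A C)
  (huniq : ∀ S : Set V, IsInitialStrongComponent A S → S = C)

include hC in
lemma ddist_le_card {u v : V} (hu : u ∈ C) (hv : v ∈ C) :
    ddist A u v ≤ ((C.ncard - 1 : ℕ) : ℕ∞) := by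
  obtain ⟨n, f, hinj, h0, hl, harc⟩ := strongC hC hu hv
  have hallC : ∀ i : Fin (n + 1), f i ∈ C := by
    have key : ∀ j, j ≤ n → f ⟨n - j, by omega⟩ ∈ C := by
      intro j
      induction j with
      | zero =>
        intro _
        have : f ⟨n, by omega⟩ = v := hl
        rw [show (⟨n - 0, by omega⟩ : Fin (n+1)) = ⟨n, by omega⟩ by congr 1]
        rw [this]; exact hv
      | succ j ih =>
        intro hj
        have hcur := ih (by omega)
        have harc' := harc ⟨n - (j+1), by omega⟩
        have hsucc : (⟨n - (j+1), by omega⟩ : Fin n).succ = (⟨n - j, by omega⟩ : Fin (n+1)) := by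
          ext; simp; omega
        rw [hsucc] at harc'
        exact enter_C hC harc' hcur
    intro i
    have := key (n - i.val) (by omega)
    have he : (⟨n - (n - i.val), by omega⟩ : Fin (n+1)) = i := by
      ext; simp; omega
    rwa [he] at this
  have hrange : Set.range f ⊆ C := by rintro z ⟨i, rfl⟩; exact hallC i
  have h1 : (Set.range f).ncard = n + 1 := by
    rw [← Set.image_univ, Set.ncard_image_of_injective _ hinj, Set.ncard_univ,
      Nat.card_eq_fintype_card, Fintype.card_fin]
  have h2 : (Set.range f).ncard ≤ C.ncard := Set.ncard_le_ncard hrange (Set.toFinite C)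
  have hn : n ≤ C.ncard - 1 := by omega
  exact ddist_le_iff_path.mpr ⟨n, hn, f, hinj, h0, hl, harc⟩

include hC in
lemma exists_in_nbr {v : V} (hv : v ∈ C) (h2 : 2 ≤ C.ncard) : ∃ x, x ∈ C ∧ A x v := by
  obtain ⟨u, hu, hune⟩ := Set.exists_ne_of_one_lt_ncard (s := C) (by omega) v
  obtain ⟨m, hw⟩ := reaches_iff_walk.mp (strongC hC hu hv)
  rcases hw.last_arc with rfl | ⟨x, hx⟩
  · exact absurd rfl hune
  · exact ⟨x, enter_C hC hx hv, hx⟩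

include hqt hC in
lemma nonadj_dist {x y : V} (hx : x ∈ C) (hy : y ∈ C) (hne : x ≠ y)
    (h1 : ¬ A x y) (h2 : ¬ A y x) : ddist A x y ≤ (3 : ℕ) := by
  obtain ⟨k, w, h0, hk, harc, hinj, hd⟩ := exists_min_path (strongC hC hx hy)
  subst h0; subst hk
  have hshort : ∀ m, Walk A (w 0) (w k) m → k ≤ m := by
    intro m hw
    have := ddist_le_of_walk hw
    rw [hd] at this
    exact_mod_cast this
  match hkk : k, harc, hinj, hshort, hd with
  | 0, harc, hinj, hshort, hd => exact absurd rfl hne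
  | 1, harc, hinj, hshort, hd => exact absurd (harc 0 (by omega)) h1
  | 2, harc, hinj, hshort, hd =>
    exact absurd (backarc hqt harc hinj hshort 0 (by omega)) h2
  | 3, harc, hinj, hshort, hd => simp [hd]
  | (m + 4), harc, hinj, hshort, hd =>
    exact absurd (bp_main hqt harc hinj hshort (by omega)) h2

end CStruct2

/-- in-neighbourhood within C -/
def NinC (A : V → V → Prop) (C : Set V) (b : V) : Set V := {x | x ∈ C ∧ A x b}

/-- out-neighbourhood within C -/
def NoutC (A : V → V → Prop) (C : Set V) (b : V) : Set V := {x | x ∈ C ∧ A b x}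

/-- semiking: 2-king except possibly on non-adjacent vertices -/
def SemiK (A : V → V → Prop) (C : Set V) (v : V) : Prop :=
  v ∈ C ∧ ∀ u ∈ C, u ≠ v → (A v u ∨ A u v) → ddist A v u ≤ (2 : ℕ)

/-- a 3-king within C -/
def KingC (A : V → V → Prop) (C : Set V) (v : V) : Prop :=
  ∀ u ∈ C, ddist A v u ≤ (3 : ℕ)

section SKm

variable [Fintype V] {C : Set V}
  (hloop : ∀ v : V, ¬ A v v)
  (hqt : KQuasiTrans A 2)
  (hC : IsInitialStrongComponent A C)
  (huniq : ∀ S : Set V, IsInitialStrongComponent A S → S = C)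

include hloop hqt in
lemma sk_of_max {S : Set V} (hSne : S.Nonempty) (hSC : S ⊆ C)
    (hclosed : ∀ b ∈ S, ∀ u ∈ C, A u b → NoutC A C b ⊆ NoutC A C u → u ∈ S) :
    ∃ b ∈ S, SemiK A C b := by
  classical
  obtain ⟨b, hbS, hbmax⟩ := Set.Finite.exists_maximal_wrt
    (fun x => (NoutC A C x).ncard) S (Set.toFinite _) hSne
  refine ⟨b, hbS, hSC hbS, ?_⟩
  by_contra hcon
  push_neg at hcon
  obtain ⟨u, huC, hune, hadj, hdlt⟩ := hcon
  have hd : ¬ ddist A b u ≤ ((2:ℕ) : ℕ∞) := not_le.mpr hdlt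
  have hAub : A u b := by
    rcases hadj with h | h
    · exact absurd (ddist_le_one h 2 (by omega)) hd
    · exact h
  have hub : u ≠ b := hune
  have hsub : NoutC A C b ⊆ NoutC A C u := by
    rintro z ⟨hzC, hAbz⟩
    have hzu : z ≠ u := by
      rintro rfl
      exact hd (ddist_le_one hAbz 2 (by omega))
    have hzb : z ≠ b := by rintro rfl; exact hloop z hAbz
    rcases qt3 hqt hAub hAbz hub hzb.symm (Ne.symm hzu) with h | h
    · exact ⟨hzC, h⟩
    · exfalso
      apply hd
      exact ddist_le_iff_walk.mpr ⟨2, le_refl _, .cons hAbz (Walk.single h)⟩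
  have huS : u ∈ S := hclosed b hbS u huC hAub hsub
  have hssub : NoutC A C b ⊂ NoutC A C u := by
    refine ⟨hsub, fun hback => ?_⟩
    have : b ∈ NoutC A C b := hback ⟨hSC hbS, hAub⟩
    exact hloop b this.2
  have hlt := Set.ncard_lt_ncard hssub (Set.toFinite _)
  have := hbmax u huS (le_of_lt hlt)
  omega

include hloop hqt hC huniq in
lemma semik_king {v : V} (h : SemiK A C v) : KingC A C v := by
  intro u huC
  by_cases huv : u = v
  · subst huv; exact ddist_self_le u 3
  by_cases hadj : A v u ∨ A u v
  · have := h.2 u huC huv hadj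
    exact this.trans (by exact_mod_cast (by omega : (2:ℕ) ≤ 3))
  · push_neg at hadj
    exact nonadj_dist hqt hC h.1 huC (Ne.symm huv) hadj.1 hadj.2

include hloop hqt hC huniq in
lemma king_of_in_nbr {x b : V} (hxC : x ∈ C) (hb : SemiK A C b) (hA : A x b) :
    KingC A C x := by
  intro u huC
  by_cases hux : u = x
  · subst hux; exact ddist_self_le u 3
  by_cases hub : u = b
  · subst hub; exact ddist_le_one hA 3 (by omega)
  have hxb : x ≠ b := by rintro rfl; exact hloop x hA
  by_cases hadjxu : A x u ∨ A u x
  · by_cases hadjbu : A b u ∨ A u b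
    · have h2 := hb.2 u huC hub hadjbu
      have := ddist_cons hA h2
      exact this.trans (Nat.cast_le.mpr (by omega))
    · push_neg at hadjbu
      rcases hadjxu with h | h
      · exact ddist_le_one h 3 (by omega)
      · rcases qt3 hqt h hA hux hxb hub with h' | h'
        · exact absurd h' hadjbu.2
        · exact absurd h' hadjbu.1
  · push_neg at hadjxu
    exact nonadj_dist hqt hC hxC huC (Ne.symm hux) hadjxu.1 hadjxu.2

end SKm

section Final

variable [Fintype V] {C : Set V}
  (hloop : ∀ v : V, ¬ A v v)
  (hqt : KQuasiTrans A 2)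
  (hC : IsInitialStrongComponent A C)
  (huniq : ∀ S : Set V, IsInitialStrongComponent A S → S = C)

include hloop hqt hC huniq in
lemma king_lift {v : V} (hv : v ∈ C) (hk : KingC A C v) : IsRKing A 3 v := by
  intro u
  by_cases hu : u ∈ C
  · exact hk u hu
  · exact ddist_le_one (out_dominate hC huniq hqt hv hu) 3 (by omega)

include hC in
lemma entry_C {K : Set V} (hKC : K ⊆ C) {w b : V} (hw : w ∈ C) (hwK : w ∉ K)
    (hb : b ∈ K) : ∃ x y, x ∈ C ∧ x ∉ K ∧ y ∈ K ∧ A x y := by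
  obtain ⟨m, hwlk⟩ := reaches_iff_walk.mp (strongC hC hw (hKC hb))
  obtain ⟨x, y, hx, hy, hA⟩ := hwlk.first_entry hwK hb
  exact ⟨x, y, enter_C hC hA (hKC hy), hx, hy, hA⟩

lemma exists_outside {B : Set V} (hB3 : B.ncard ≤ 3) (h4 : 4 ≤ C.ncard) :
    ∃ w, w ∈ C ∧ w ∉ B := by
  by_contra hcon
  push_neg at hcon
  have : C ⊆ B := hcon
  have := Set.ncard_le_ncard this (Set.toFinite _)
  omega

include hloop hqt hC huniq in
lemma corner_case {c1 c2 x : V} (h4 : 4 ≤ C.ncard)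
    (hc1 : SemiK A C c1) (hc2 : SemiK A C c2) (hc12 : A c1 c2)
    (hxC : x ∈ C) (hA : A x c1) (hxc2 : x ≠ c2)
    (hNin1 : ∀ y, y ∈ C → A y c1 → y = c2 ∨ y = x)
    (hNin2 : ∀ y, y ∈ C → A y c2 → y = c1) :
    ∃ k1 k2 k3 k4 : V, k1 ≠ k2 ∧ k1 ≠ k3 ∧ k1 ≠ k4 ∧ k2 ≠ k3 ∧ k2 ≠ k4 ∧ k3 ≠ k4 ∧
      IsRKing A 3 k1 ∧ IsRKing A 3 k2 ∧ IsRKing A 3 k3 ∧ IsRKing A 3 k4 := by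
  have hx1 : x ≠ c1 := by rintro rfl; exact hloop x hA
  have h12 : c1 ≠ c2 := by rintro rfl; exact hloop c1 hc12
  -- x is a semiking
  have hxSK : SemiK A C x := by
    refine ⟨hxC, ?_⟩
    intro u huC hune hadj
    by_cases hu1 : u = c1
    · subst hu1; exact ddist_le_one hA 2 (by omega)
    by_cases hu2 : u = c2
    · subst hu2
      exact ddist_le_iff_walk.mpr ⟨2, le_refl _, .cons hA (Walk.single hc12)⟩
    by_cases hc1u : A c1 u
    · exact ddist_le_iff_walk.mpr ⟨2, le_refl _, .cons hA (Walk.single hc1u)⟩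
    rcases hadj with h | h
    · exact ddist_le_one h 2 (by omega)
    · rcases qt3 hqt h hA hune hx1 hu1 with h' | h'
      · rcases hNin1 u huC h' with rfl | rfl
        · exact absurd rfl hu2
        · exact absurd rfl hune
      · exact absurd h' hc1u
  -- find a fourth king entering at x
  obtain ⟨w, hwC, hwT⟩ := exists_outside (B := {c1, c2, x})
    (by
      have h1 : ({c1, c2, x} : Set V).ncard ≤ ({c2, x} : Set V).ncard + 1 :=
        Set.ncard_insert_le _ _
      have h2 : ({c2, x} : Set V).ncard ≤ ({x} : Set V).ncard + 1 :=
        Set.ncard_insert_le _ _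
      have h3 : ({x} : Set V).ncard = 1 := Set.ncard_singleton x
      omega) h4
  have hTC : ({c1, c2, x} : Set V) ⊆ C := by
    rintro z (rfl | rfl | rfl)
    · exact hc1.1
    · exact hc2.1
    · exact hxC
  obtain ⟨p, q, hpC, hpT, hqT, hApq⟩ := entry_C hC hTC hwC hwT
    (show c1 ∈ ({c1, c2, x} : Set V) by simp)
  have hpking : KingC A C p := by
    simp only [Set.mem_insert_iff, Set.mem_singleton_iff] at hqT
    rcases hqT with h | h | h
    · rcases hNin1 p hpC (h ▸ hApq) with h' | h'
      · exact absurd (by simp [h'] : p ∈ ({c1, c2, x} : Set V)) hpT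
      · exact absurd (by simp [h'] : p ∈ ({c1, c2, x} : Set V)) hpT
    · exact absurd (by simp [hNin2 p hpC (h ▸ hApq)] : p ∈ ({c1, c2, x} : Set V)) hpT
    · exact king_of_in_nbr hloop hqt hC huniq hpC hxSK (h ▸ hApq)
  refine ⟨c1, c2, x, p, h12, Ne.symm hx1, ?_, Ne.symm hxc2, ?_, ?_, ?_, ?_, ?_, ?_⟩
  · rintro rfl; exact hpT (by simp)
  · rintro rfl; exact hpT (by simp)
  · rintro rfl; exact hpT (by simp)
  · exact king_lift hloop hqt hC huniq hc1.1 (semik_king hloop hqt hC huniq hc1)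
  · exact king_lift hloop hqt hC huniq hc2.1 (semik_king hloop hqt hC huniq hc2)
  · exact king_lift hloop hqt hC huniq hxC (semik_king hloop hqt hC huniq hxSK)
  · exact king_lift hloop hqt hC huniq hpC hpking

end Final

section Final2

variable [Fintype V] {C : Set V}
  (hloop : ∀ v : V, ¬ A v v)
  (hqt : KQuasiTrans A 2)
  (hC : IsInitialStrongComponent A C)
  (huniq : ∀ S : Set V, IsInitialStrongComponent A S → S = C)

include hloop hqt hC huniq in
lemma four_kings (h4 : 4 ≤ C.ncard) :
    ∃ k1 k2 k3 k4 : V, k1 ≠ k2 ∧ k1 ≠ k3 ∧ k1 ≠ k4 ∧ k2 ≠ k3 ∧ k2 ≠ k4 ∧ k3 ≠ k4 ∧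
      IsRKing A 3 k1 ∧ IsRKing A 3 k2 ∧ IsRKing A 3 k3 ∧ IsRKing A 3 k4 := by
  classical
  have hCne : C.Nonempty := by
    rcases Set.eq_empty_or_nonempty C with h | h
    · rw [h] at h4; simp at h4
    · exact h
  -- first semiking: maximum out-degree in C
  obtain ⟨b1, hb1C, hb1⟩ := sk_of_max hloop hqt hCne (le_refl _)
    (fun b _ u huC _ _ => huC)
  -- second: maximum out-degree among in-neighbours of b1
  obtain ⟨z0, hz0C, hz0A⟩ := exists_in_nbr hC hb1C (by omega)
  obtain ⟨b2, hb2N, hb2⟩ := sk_of_max hloop hqt (⟨z0, hz0C, hz0A⟩ : (NinC A C b1).Nonempty)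
    (fun z hz => hz.1)
    (by
      rintro b ⟨hbC, hbA⟩ u huC hAub hsub
      have : b1 ∈ NoutC A C u := hsub ⟨hb1C, hbA⟩
      exact ⟨huC, this.2⟩)
  obtain ⟨hb2C, hb2A⟩ := hb2N
  have hb21 : b2 ≠ b1 := by rintro rfl; exact hloop b2 hb2A
  by_cases hW : (NinC A C b1 ∩ NinC A C b2).Nonempty
  · -- third semiking from common in-neighbours
    obtain ⟨b3, hb3N, hb3⟩ := sk_of_max hloop hqt hW (fun z hz => hz.1.1)
      (by
        rintro b ⟨⟨hbC, hbA1⟩, ⟨-, hbA2⟩⟩ u huC hAub hsub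
        have h1 : b1 ∈ NoutC A C u := hsub ⟨hb1C, hbA1⟩
        have h2 : b2 ∈ NoutC A C u := hsub ⟨hb2C, hbA2⟩
        exact ⟨⟨huC, h1.2⟩, ⟨huC, h2.2⟩⟩)
    obtain ⟨⟨hb3C, hb3A1⟩, ⟨-, hb3A2⟩⟩ := hb3N
    have hb31 : b3 ≠ b1 := by rintro rfl; exact hloop b3 hb3A1
    have hb32 : b3 ≠ b2 := by rintro rfl; exact hloop b3 hb3A2
    -- a fourth king entering the triple
    obtain ⟨w, hwC, hwB⟩ := exists_outside (B := {b1, b2, b3})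
      (by
        have h1 : ({b1, b2, b3} : Set V).ncard ≤ ({b2, b3} : Set V).ncard + 1 :=
          Set.ncard_insert_le _ _
        have h2 : ({b2, b3} : Set V).ncard ≤ ({b3} : Set V).ncard + 1 :=
          Set.ncard_insert_le _ _
        have h3 : ({b3} : Set V).ncard = 1 := Set.ncard_singleton b3
        omega) h4
    have hBC : ({b1, b2, b3} : Set V) ⊆ C := by
      rintro z (rfl | rfl | rfl)
      · exact hb1C
      · exact hb2C
      · exact hb3C
    obtain ⟨p, q, hpC, hpB, hqB, hApq⟩ := entry_C hC hBC hwC hwB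
      (show b1 ∈ ({b1, b2, b3} : Set V) by simp)
    have hpking : KingC A C p := by
      simp only [Set.mem_insert_iff, Set.mem_singleton_iff] at hqB
      rcases hqB with h | h | h
      · exact king_of_in_nbr hloop hqt hC huniq hpC hb1 (h ▸ hApq)
      · exact king_of_in_nbr hloop hqt hC huniq hpC hb2 (h ▸ hApq)
      · exact king_of_in_nbr hloop hqt hC huniq hpC hb3 (h ▸ hApq)
    refine ⟨b1, b2, b3, p, Ne.symm hb21, Ne.symm hb31, ?_, Ne.symm hb32, ?_, ?_, ?_, ?_, ?_, ?_⟩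
    · rintro rfl; exact hpB (by simp)
    · rintro rfl; exact hpB (by simp)
    · rintro rfl; exact hpB (by simp)
    · exact king_lift hloop hqt hC huniq hb1C (semik_king hloop hqt hC huniq hb1)
    · exact king_lift hloop hqt hC huniq hb2C (semik_king hloop hqt hC huniq hb2)
    · exact king_lift hloop hqt hC huniq hb3C (semik_king hloop hqt hC huniq hb3)
    · exact king_lift hloop hqt hC huniq hpC hpking
  · -- no common in-neighbour
    set P : Set V := NinC A C b1 \ {b2} with hPdef
    set Q : Set V := NinC A C b2 \ {b1} with hQdef
    have hPQdisj : ∀ z, z ∈ P → z ∈ Q → False := by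
      rintro z ⟨hz1, -⟩ ⟨hz2, -⟩
      exact hW ⟨z, hz1, hz2⟩
    by_cases hPQ2 : ∃ x y, x ∈ P ∪ Q ∧ y ∈ P ∪ Q ∧ x ≠ y
    · -- two in-neighbours outside {b1,b2} : four kings
      obtain ⟨x, y, hx, hy, hxy⟩ := hPQ2
      have hking : ∀ z, z ∈ P ∪ Q → KingC A C z ∧ z ∈ C ∧ z ≠ b1 ∧ z ≠ b2 := by
        rintro z (⟨⟨hzC, hzA⟩, hzne⟩ | ⟨⟨hzC, hzA⟩, hzne⟩)
        · have hzb1 : z ≠ b1 := by rintro rfl; exact hloop z hzA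
          exact ⟨king_of_in_nbr hloop hqt hC huniq hzC hb1 hzA, hzC, hzb1, by simpa using hzne⟩
        · have hzb2 : z ≠ b2 := by rintro rfl; exact hloop z hzA
          exact ⟨king_of_in_nbr hloop hqt hC huniq hzC hb2 hzA, hzC, by simpa using hzne, hzb2⟩
      obtain ⟨hxK, hxC, hxb1, hxb2⟩ := hking x hx
      obtain ⟨hyK, hyC, hyb1, hyb2⟩ := hking y hy
      refine ⟨b1, b2, x, y, Ne.symm hb21, Ne.symm hxb1, Ne.symm hyb1, Ne.symm hxb2,
        Ne.symm hyb2, hxy, ?_, ?_, ?_, ?_⟩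
      · exact king_lift hloop hqt hC huniq hb1C (semik_king hloop hqt hC huniq hb1)
      · exact king_lift hloop hqt hC huniq hb2C (semik_king hloop hqt hC huniq hb2)
      · exact king_lift hloop hqt hC huniq hxC hxK
      · exact king_lift hloop hqt hC huniq hyC hyK
    · by_cases hPQ1 : ∃ x, x ∈ P ∪ Q
      · obtain ⟨x, hx⟩ := hPQ1
        have huniqx : ∀ y, y ∈ P ∪ Q → y = x := by
          intro y hy
          by_contra hne
          exact hPQ2 ⟨y, x, hy, hx, hne⟩
        rcases hx with hxP | hxQ
        · -- x ∈ P : apply the corner case with c1 = b1, c2 = b2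
          obtain ⟨⟨hxC, hxA⟩, hxne2⟩ := hxP
          have hxne2' : x ≠ b2 := by simpa using hxne2
          have hNin1 : ∀ y, y ∈ C → A y b1 → y = b2 ∨ y = x := by
            intro y hyC hyA
            by_cases h : y = b2
            · exact Or.inl h
            · exact Or.inr (huniqx y (Or.inl ⟨⟨hyC, hyA⟩, by simpa using h⟩))
          have hNin2 : ∀ y, y ∈ C → A y b2 → y = b1 := by
            intro y hyC hyA
            by_contra h
            have hyQ : y ∈ Q := ⟨⟨hyC, hyA⟩, by simpa using h⟩
            have := huniqx y (Or.inr hyQ)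
            subst this
            exact hPQdisj y ⟨⟨hxC, hxA⟩, hxne2⟩ hyQ
          have hb1b2 : A b1 b2 := by
            obtain ⟨z, hzC, hzA⟩ := exists_in_nbr hC hb2C (by omega)
            have := hNin2 z hzC hzA
            subst this
            exact hzA
          exact corner_case hloop hqt hC huniq h4 hb1 hb2 hb1b2 hxC hxA hxne2'
            hNin1 hNin2
        · -- x ∈ Q : apply the corner case with c1 = b2, c2 = b1
          obtain ⟨⟨hxC, hxA⟩, hxne1⟩ := hxQ
          have hxne1' : x ≠ b1 := by simpa using hxne1
          have hNin1 : ∀ y, y ∈ C → A y b2 → y = b1 ∨ y = x := by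
            intro y hyC hyA
            by_cases h : y = b1
            · exact Or.inl h
            · exact Or.inr (huniqx y (Or.inr ⟨⟨hyC, hyA⟩, by simpa using h⟩))
          have hNin2 : ∀ y, y ∈ C → A y b1 → y = b2 := by
            intro y hyC hyA
            by_contra h
            have hyP : y ∈ P := ⟨⟨hyC, hyA⟩, by simpa using h⟩
            have := huniqx y (Or.inl hyP)
            subst this
            exact hPQdisj y hyP ⟨⟨hxC, hxA⟩, hxne1⟩
          exact corner_case hloop hqt hC huniq h4 hb2 hb1 hb2A hxC hxA hxne1'
            hNin1 hNin2
      · -- P ∪ Q empty : contradiction with strongness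
        exfalso
        push_neg at hPQ1
        obtain ⟨w, hwC, hwB⟩ := exists_outside (B := {b1, b2})
          (by
            have h2 : ({b1, b2} : Set V).ncard ≤ ({b2} : Set V).ncard + 1 :=
              Set.ncard_insert_le _ _
            have h3 : ({b2} : Set V).ncard = 1 := Set.ncard_singleton b2
            omega) h4
        have hBC : ({b1, b2} : Set V) ⊆ C := by
          rintro z (rfl | rfl)
          · exact hb1C
          · exact hb2C
        obtain ⟨p, q, hpC, hpB, hqB, hApq⟩ := entry_C hC hBC hwC hwB
          (show b1 ∈ ({b1, b2} : Set V) by simp)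
        simp only [Set.mem_insert_iff, Set.mem_singleton_iff] at hqB
        rcases hqB with h | h
        · refine hPQ1 p (Or.inl ⟨⟨hpC, h ▸ hApq⟩, ?_⟩)
          simp only [Set.mem_singleton_iff]
          rintro rfl
          exact hpB (by simp)
        · refine hPQ1 p (Or.inr ⟨⟨hpC, h ▸ hApq⟩, ?_⟩)
          simp only [Set.mem_singleton_iff]
          rintro rfl
          exact hpB (by simp)

end Final2

end QTP

/-- quasi-transitive digraph with unique initial strong component `C`.
If `|C| ≥ 4` there are at least four `3`-kings; if `|C| = 3` every vertex of `C` is a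
`2`-king; if `|C| ∈ {1,2}` every vertex of `C` is a `1`-king. -/
theorem qt_number_of_three_kings
    [Fintype V] (A : V → V → Prop) (hloop : ∀ v : V, ¬ A v v)
    (hqt : KQuasiTrans A 2)
    (C : Set V) (hC : IsInitialStrongComponent A C)
    (huniq : ∀ S : Set V, IsInitialStrongComponent A S → S = C) :
    (4 ≤ C.ncard → 4 ≤ {v : V | IsRKing A 3 v}.ncard) ∧
    (C.ncard = 3 → ∀ v ∈ C, IsRKing A 2 v) ∧
    (C.ncard = 1 ∨ C.ncard = 2 → ∀ v ∈ C, IsRKing A 1 v) := by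
  refine ⟨?_, ?_, ?_⟩
  · intro h4
    obtain ⟨k1, k2, k3, k4, h12, h13, h14, h23, h24, h34, hk1, hk2, hk3, hk4⟩ :=
      QTP.four_kings hloop hqt hC huniq h4
    have hsub : ({k1, k2, k3, k4} : Set V) ⊆ {v : V | IsRKing A 3 v} := by
      rintro z (rfl | rfl | rfl | rfl) <;> assumption
    have hcard : ({k1, k2, k3, k4} : Set V).ncard = 4 := by
      rw [Set.ncard_insert_of_notMem (by simp [h12, h13, h14]),
        Set.ncard_insert_of_notMem (by simp [h23, h24]), Set.ncard_pair h34]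
    calc (4 : ℕ) = ({k1, k2, k3, k4} : Set V).ncard := hcard.symm
    _ ≤ _ := Set.ncard_le_ncard hsub (Set.toFinite _)
  · intro hc3 v hv u
    by_cases hu : u ∈ C
    · have := QTP.ddist_le_card hC hv hu
      rw [hc3] at this
      simpa using this
    · exact QTP.ddist_le_one (QTP.out_dominate hC huniq hqt hv hu) 2 (by omega)
  · intro hc12 v hv u
    by_cases hu : u ∈ C
    · have := QTP.ddist_le_card hC hv hu
      refine this.trans (Nat.cast_le.mpr ?_)
      rcases hc12 with h | h <;> omega
    · exact QTP.ddist_le_one (QTP.out_dominate hC huniq hqt hv hu) 1 (by omega)
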